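/- Lengyel's identity: for |x| < 1, (1+x)/(1-x) = ∑_{n=1}^∞ x^{⌊n/φ⌋} + ∑_{n=1}^∞ x^{⌊n φ²⌋}, where φ = (1+√5)/2 is the golden ratio. -/

import Mathlib

open Real

namespace LengyelAux

/-- Beatty sequence `⌊m·gr⌋`. -/
noncomputable def a (gr : ℝ) (m : ℕ) : ℕ := ⌊(m : ℝ) * gr⌋₊

/-- Beatty sequence `⌊m/gr²⌋`. -/
noncomputable def b (gr : ℝ) (m : ℕ) : ℕ := ⌊(m : ℝ) / gr ^ 2⌋₊

/-- Combined exponent function: evens index the first series, odds the second. -/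
noncomputable def F (gr : ℝ) (j : ℕ) : ℕ :=
  if j % 2 = 0 then ⌊(((j / 2 : ℕ) : ℝ) + 1) / gr⌋₊
  else ⌊(((j / 2 : ℕ) : ℝ) + 1) * gr ^ 2⌋₊

/-- Target exponents: `0,1,1,2,2,3,3,…`. -/
def G (j : ℕ) : ℕ := if j % 2 = 0 then j / 2 else j / 2 + 1

/-- The rearranging bijection. -/
noncomputable def Phi (gr : ℝ) (j : ℕ) : ℕ :=
  if j % 2 = 0 then 2 * a gr (j / 2)
  else if a gr (j / 2 + 2) = a gr (j / 2 + 1) + 2 then 2 * (a gr (j / 2 + 1) + 1)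
  else 2 * b gr (j / 2 + 1) + 1

variable {gr : ℝ}

lemma gr_pos (h1 : 1 < gr) : 0 < gr := lt_trans one_pos h1

lemma s1 (h1 : 1 < gr) (hirr : Irrational gr) {m : ℕ} (hm : m ≠ 0) :
    (a gr m : ℝ) < (m : ℝ) * gr := by
  have hn : Irrational ((m : ℝ) * gr) := irrational_natCast_mul_iff.mpr ⟨hm, hirr⟩
  have hle : (a gr m : ℝ) ≤ (m : ℝ) * gr :=
    Nat.floor_le (by positivity)
  exact hle.lt_of_ne fun h => hn.ne_nat (a gr m) h.symm

lemma s2 (m : ℕ) : (m : ℝ) * gr < a gr m + 1 := Nat.lt_floor_add_one _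

lemma inv_sq (h1 : 1 < gr) (hsq : gr ^ 2 = gr + 1) (m : ℕ) :
    (m : ℝ) / gr ^ 2 = 2 * m - m * gr := by
  have hg := gr_pos h1
  rw [div_eq_iff (by positivity)]
  linear_combination ((m : ℝ) * gr - m) * hsq

lemma t1 (h1 : 1 < gr) (hsq : gr ^ 2 = gr + 1) (hirr : Irrational gr) {m : ℕ} (hm : m ≠ 0) :
    (b gr m : ℝ) < (m : ℝ) / gr ^ 2 := by
  have hg := gr_pos h1
  have hn : Irrational ((m : ℝ) / gr ^ 2) := by
    rw [inv_sq h1 hsq m]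
    have : Irrational ((m : ℝ) * gr) := irrational_natCast_mul_iff.mpr ⟨hm, hirr⟩
    have h2 : Irrational (((2 * m : ℕ) : ℝ) - (m : ℝ) * gr) :=
      irrational_natCast_sub_iff.mpr this
    convert h2 using 2
    push_cast; ring
  have hle : (b gr m : ℝ) ≤ (m : ℝ) / gr ^ 2 := Nat.floor_le (by positivity)
  exact hle.lt_of_ne fun h => hn.ne_nat (b gr m) h.symm

lemma t2 (m : ℕ) : (m : ℝ) / gr ^ 2 < b gr m + 1 := Nat.lt_floor_add_one _

lemma lemA (h1 : 1 < gr) (hirr : Irrational gr) (n m : ℕ) :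
    ⌊((n : ℝ) + 1) / gr⌋₊ = m ↔ a gr m ≤ n ∧ n < a gr (m + 1) := by
  have hg := gr_pos h1
  rw [Nat.floor_eq_iff (by positivity), le_div_iff₀ hg, div_lt_iff₀ hg]
  constructor
  · rintro ⟨hl, hr⟩
    constructor
    · rcases Nat.eq_zero_or_pos m with hm | hm
      · subst hm; simp [a]
      · have := s1 h1 hirr (Nat.pos_iff_ne_zero.mp hm)
        have : (a gr m : ℝ) < (n : ℝ) + 1 := lt_of_lt_of_le this hl
        have : (a gr m : ℝ) < ((n + 1 : ℕ) : ℝ) := by push_cast; linarith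
        have := Nat.cast_lt.mp this
        omega
    · have : ((n + 1 : ℕ) : ℝ) ≤ ((m + 1 : ℕ) : ℝ) * gr := by push_cast; linarith
      have := Nat.le_floor this
      have : n + 1 ≤ a gr (m + 1) := this
      omega
  · rintro ⟨hl, hr⟩
    constructor
    · have h2 := s2 (gr := gr) m
      have : (a gr m : ℝ) ≤ (n : ℝ) := Nat.cast_le.mpr hl
      linarith
    · have h1' := s1 h1 hirr (Nat.succ_ne_zero m)
      have : ((n + 1 : ℕ) : ℝ) ≤ (a gr (m + 1) : ℝ) := Nat.cast_le.mpr (by omega)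
      push_cast at this h1' ⊢
      linarith

lemma lemB (h1 : 1 < gr) (hsq : gr ^ 2 = gr + 1) (hirr : Irrational gr) (n m : ℕ) :
    ⌊((n : ℝ) + 1) * gr ^ 2⌋₊ = m ↔ b gr m ≤ n ∧ n < b gr (m + 1) := by
  have hg := gr_pos h1
  have hg2 : (0 : ℝ) < gr ^ 2 := by positivity
  rw [Nat.floor_eq_iff (by positivity), ← div_le_iff₀ hg2, ← lt_div_iff₀ hg2]
  constructor
  · rintro ⟨hl, hr⟩
    constructor
    · rcases Nat.eq_zero_or_pos m with hm | hm
      · subst hm; simp [b]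
      · have := t1 h1 hsq hirr (Nat.pos_iff_ne_zero.mp hm)
        have : (b gr m : ℝ) < ((n + 1 : ℕ) : ℝ) := by push_cast; linarith
        have := Nat.cast_lt.mp this
        omega
    · have : ((n + 1 : ℕ) : ℝ) ≤ ((m + 1 : ℕ) : ℝ) / gr ^ 2 := by push_cast; linarith
      have := Nat.le_floor this
      have : n + 1 ≤ b gr (m + 1) := this
      omega
  · rintro ⟨hl, hr⟩
    constructor
    · have h2 := t2 (gr := gr) m
      have : (b gr m : ℝ) ≤ (n : ℝ) := Nat.cast_le.mpr hl
      linarith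
    · have h1' := t1 h1 hsq hirr (Nat.succ_ne_zero m)
      have : ((n + 1 : ℕ) : ℝ) ≤ (b gr (m + 1) : ℝ) := Nat.cast_le.mpr (by omega)
      push_cast at this h1' ⊢
      linarith

lemma a_zero : a gr 0 = 0 := by simp [a]

lemma b_zero : b gr 0 = 0 := by simp [b]

lemma a_one (h1 : 1 < gr) (h2 : gr < 2) : a gr 1 = 1 := by
  rw [a]
  rw [Nat.floor_eq_iff (by positivity)]
  push_cast
  constructor <;> linarith

lemma b_one (h1 : 1 < gr) (hsq : gr ^ 2 = gr + 1) : b gr 1 = 0 := by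
  rw [b, Nat.floor_eq_zero]
  rw [div_lt_one (by positivity)]
  push_cast
  linarith

lemma astep (h1 : 1 < gr) (m : ℕ) : a gr m + 1 ≤ a gr (m + 1) := by
  have hle : (a gr m : ℝ) ≤ (m : ℝ) * gr := Nat.floor_le (by positivity)
  have : ((a gr m + 1 : ℕ) : ℝ) ≤ ((m + 1 : ℕ) : ℝ) * gr := by push_cast; nlinarith
  exact Nat.le_floor this

lemma astep2 (h1 : 1 < gr) (h2 : gr < 2) (m : ℕ) : a gr (m + 1) ≤ a gr m + 2 := by
  have h2' := s2 (gr := gr) m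
  have hlt : ((m + 1 : ℕ) : ℝ) * gr < ((a gr m + 3 : ℕ) : ℝ) := by push_cast; nlinarith
  have := (Nat.floor_lt (by positivity)).mpr hlt
  have : a gr (m + 1) < a gr m + 3 := this
  omega

lemma ab_sum (h1 : 1 < gr) (h2 : gr < 2) (hsq : gr ^ 2 = gr + 1) (hirr : Irrational gr)
    {m : ℕ} (hm : m ≠ 0) : a gr m + b gr m + 1 = 2 * m := by
  have ha1 := s1 h1 hirr hm
  have ha2 := s2 (gr := gr) m
  have hm1 : 1 ≤ m := Nat.pos_iff_ne_zero.mpr hm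
  have haux : a gr m + 1 ≤ 2 * m := by
    have : (a gr m : ℝ) < ((2 * m : ℕ) : ℝ) := by push_cast; nlinarith
    have := Nat.cast_lt.mp this
    omega
  suffices h : b gr m = 2 * m - 1 - a gr m by omega
  set k := 2 * m - 1 - a gr m with hk
  have hkc : a gr m + 1 + k = 2 * m := by omega
  have hkr : (k : ℝ) = 2 * m - 1 - a gr m := by
    have : ((a gr m + 1 + k : ℕ) : ℝ) = ((2 * m : ℕ) : ℝ) := by rw [hkc]
    push_cast at this; linarith
  rw [b, inv_sq h1 hsq m]
  rw [Nat.floor_eq_iff (by nlinarith)]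
  constructor
  · rw [hkr]; linarith
  · rw [hkr]; push_cast; linarith

lemma FPhi (h1 : 1 < gr) (h2 : gr < 2) (hsq : gr ^ 2 = gr + 1) (hirr : Irrational gr)
    (j : ℕ) : F gr (Phi gr j) = G j := by
  by_cases hj : j % 2 = 0
  · rw [Phi, if_pos hj, F, if_pos (Nat.mul_mod_right 2 _),
      Nat.mul_div_cancel_left _ (by norm_num : 0 < 2), G, if_pos hj]
    exact (lemA h1 hirr _ _).mpr ⟨le_refl _, by have := astep h1 (j / 2); omega⟩
  · rw [Phi, if_neg hj, G, if_neg hj]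
    set k := j / 2 with hk
    by_cases hc : a gr (k + 2) = a gr (k + 1) + 2
    · rw [if_pos hc, F, if_pos (Nat.mul_mod_right 2 _),
        Nat.mul_div_cancel_left _ (by norm_num : 0 < 2)]
      have hc2 : a gr (k + 1 + 1) = a gr (k + 1) + 2 := hc
      exact (lemA h1 hirr _ _).mpr ⟨by omega, by omega⟩
    · rw [if_neg hc, F, if_neg (by omega)]
      have hdiv : (2 * b gr (k + 1) + 1) / 2 = b gr (k + 1) := by omega
      rw [hdiv]
      have e1 : a gr (k + 1) + b gr (k + 1) + 1 = 2 * (k + 1) :=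
        ab_sum h1 h2 hsq hirr (by omega)
      have e2 : a gr (k + 2) + b gr (k + 2) + 1 = 2 * (k + 2) :=
        ab_sum h1 h2 hsq hirr (by omega)
      have hst : a gr (k + 1) + 1 ≤ a gr (k + 2) := astep h1 (k + 1)
      have hst2 : a gr (k + 2) ≤ a gr (k + 1) + 2 := astep2 h1 h2 (k + 1)
      exact (lemB h1 hsq hirr _ _).mpr ⟨le_refl _, show b gr (k + 1) < b gr (k + 2) by omega⟩

lemma Phi_bij (h1 : 1 < gr) (h2 : gr < 2) (hsq : gr ^ 2 = gr + 1) (hirr : Irrational gr) :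
    Function.Bijective (Phi gr) := by
  constructor
  · intro i j hij
    have hG : G i = G j := by
      rw [← FPhi h1 h2 hsq hirr i, ← FPhi h1 h2 hsq hirr j, hij]
    by_cases hi : i % 2 = 0 <;> by_cases hj : j % 2 = 0
    · simp only [G, if_pos hi, if_pos hj] at hG; omega
    · -- i even, j odd
      simp only [G, if_pos hi, if_neg hj] at hG
      simp only [Phi, if_pos hi, if_neg hj] at hij
      exfalso
      by_cases hc : a gr (j / 2 + 2) = a gr (j / 2 + 1) + 2
      · rw [if_pos hc] at hij
        rw [show i / 2 = j / 2 + 1 from hG] at hij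
        omega
      · rw [if_neg hc] at hij; omega
    · simp only [G, if_neg hi, if_pos hj] at hG
      simp only [Phi, if_neg hi, if_pos hj] at hij
      exfalso
      by_cases hc : a gr (i / 2 + 2) = a gr (i / 2 + 1) + 2
      · rw [if_pos hc] at hij
        rw [show j / 2 = i / 2 + 1 from hG.symm] at hij
        omega
      · rw [if_neg hc] at hij; omega
    · simp only [G, if_neg hi, if_neg hj] at hG
      simp only [Phi, if_neg hi, if_neg hj] at hij
      have : i / 2 = j / 2 := by omega
      omega
  · have claimA : ∀ m n : ℕ, a gr m ≤ n → n < a gr (m + 1) → ∃ j, Phi gr j = 2 * n := by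
      intro m n hl hr
      by_cases hcase : n = a gr m
      · refine ⟨2 * m, ?_⟩
        rw [Phi, if_pos (Nat.mul_mod_right 2 _), Nat.mul_div_cancel_left _ (by norm_num : 0 < 2)]
        omega
      · have hstep2 := astep2 h1 h2 m
        have hst := astep h1 m
        have hn2 : n = a gr m + 1 := by omega
        have hn3 : a gr (m + 1) = a gr m + 2 := by omega
        have hm0 : m ≠ 0 := by
          intro h
          rw [h] at hn3
          simp [a_one h1 h2, a_zero (gr := gr)] at hn3
        obtain ⟨m', rfl⟩ : ∃ m', m = m' + 1 := ⟨m - 1, by omega⟩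
        refine ⟨2 * m' + 1, ?_⟩
        have hd : (2 * m' + 1) / 2 = m' := by omega
        have hc2 : a gr (m' + 1 + 1) = a gr (m' + 1) + 2 := hn3
        rw [Phi, if_neg (by omega), hd, if_pos hc2]
        omega
    have claimB : ∀ m n : ℕ, b gr m ≤ n → n < b gr (m + 1) → ∃ j, Phi gr j = 2 * n + 1 := by
      intro m n hl hr
      have hm0 : m ≠ 0 := by
        intro h
        rw [h] at hl hr
        rw [b_zero] at hl
        rw [show (0 : ℕ) + 1 = 1 from rfl, b_one h1 hsq] at hr
        omega
      have e1 : a gr m + b gr m + 1 = 2 * m := ab_sum h1 h2 hsq hirr hm0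
      have e2 : a gr (m + 1) + b gr (m + 1) + 1 = 2 * (m + 1) :=
        ab_sum h1 h2 hsq hirr (by omega)
      have hst := astep h1 m
      have hs2' := astep2 h1 h2 m
      have hcond : ¬(a gr (m + 1) = a gr m + 2) := by omega
      have hneq : n = b gr m := by omega
      obtain ⟨m', rfl⟩ : ∃ m', m = m' + 1 := ⟨m - 1, by omega⟩
      refine ⟨2 * m' + 1, ?_⟩
      have hd : (2 * m' + 1) / 2 = m' := by omega
      have hcond2 : ¬(a gr (m' + 1 + 1) = a gr (m' + 1) + 2) := hcond
      rw [Phi, if_neg (by omega), hd, if_neg hcond2]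
      omega
    intro p
    by_cases hp : p % 2 = 0
    · obtain ⟨n, rfl⟩ : ∃ n, p = 2 * n := ⟨p / 2, by omega⟩
      have hmem := (lemA h1 hirr n ⌊((n : ℝ) + 1) / gr⌋₊).mp rfl
      exact claimA _ n hmem.1 hmem.2
    · obtain ⟨n, rfl⟩ : ∃ n, p = 2 * n + 1 := ⟨p / 2, by omega⟩
      have hmem := (lemB h1 hsq hirr n ⌊((n : ℝ) + 1) * gr ^ 2⌋₊).mp rfl
      exact claimB _ n hmem.1 hmem.2

end LengyelAux

open LengyelAux

/-- Lengyel's identity: for `|x| < 1`,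
`(1+x)/(1-x) = ∑_{n≥1} x^⌊n/φ⌋ + ∑_{n≥1} x^⌊nφ²⌋`, with `φ` the golden ratio. -/
theorem lengyel_identity (x : ℝ) (hx : |x| < 1) :
    (1 + x) / (1 - x) =
      (∑' n : ℕ, x ^ (⌊((n : ℝ) + 1) / ((1 + Real.sqrt 5) / 2)⌋₊)) +
        ∑' n : ℕ, x ^ (⌊((n : ℝ) + 1) * ((1 + Real.sqrt 5) / 2) ^ 2⌋₊) := by
  set gr : ℝ := (1 + Real.sqrt 5) / 2 with hgr
  have hs : Real.sqrt 5 ^ 2 = 5 := Real.sq_sqrt (by norm_num)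
  have hsn : (0 : ℝ) ≤ Real.sqrt 5 := Real.sqrt_nonneg 5
  have hs2 : 2 < Real.sqrt 5 := by nlinarith
  have hs3 : Real.sqrt 5 < 3 := by nlinarith
  have h1 : 1 < gr := by rw [hgr]; linarith
  have h2 : gr < 2 := by rw [hgr]; linarith
  have hsq : gr ^ 2 = gr + 1 := by rw [hgr]; linear_combination hs / 4
  have hirr5 : Irrational (Real.sqrt 5) := by
    simpa using (Nat.Prime.irrational_sqrt (p := 5) (by norm_num))
  have hirr : Irrational gr := by
    rintro ⟨q, hq⟩
    exact hirr5 ⟨2 * q - 1, by push_cast; rw [hgr] at hq; linarith⟩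
  have hx1 : x < 1 := (abs_lt.mp hx).2
  have hne : (1 : ℝ) - x ≠ 0 := sub_ne_zero.mpr (by linarith)
  have hgeo : Summable fun m : ℕ => x ^ m := summable_geometric_of_abs_lt_one hx
  have hgeo1 : Summable fun m : ℕ => x ^ (m + 1) := by
    exact hgeo.comp_injective (add_left_injective 1)
  have hGe : ∀ k : ℕ, G (2 * k) = k := by
    intro k; rw [G, if_pos (Nat.mul_mod_right 2 k)]; omega
  have hGo : ∀ k : ℕ, G (2 * k + 1) = k + 1 := by
    intro k; rw [G, if_neg (by omega)]; omega
  have hGsum : Summable fun j : ℕ => x ^ G j := by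
    apply Summable.even_add_odd
    · simpa [hGe] using hgeo
    · simpa [hGo] using hgeo1
  have hFPhi := FPhi h1 h2 hsq hirr
  let Φ : ℕ ≃ ℕ := Equiv.ofBijective _ (Phi_bij h1 h2 hsq hirr)
  have hcomp : ((fun j : ℕ => x ^ F gr j) ∘ Φ) = fun j : ℕ => x ^ G j := by
    funext j
    simp only [Function.comp_apply]
    have : Φ j = Phi gr j := rfl
    rw [this, hFPhi j]
  have hFsum : Summable fun j : ℕ => x ^ F gr j := by
    rw [← Equiv.summable_iff Φ, hcomp]
    exact hGsum
  have hFe : ∀ k : ℕ, F gr (2 * k) = ⌊((k : ℝ) + 1) / gr⌋₊ := by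
    intro k
    rw [F, if_pos (Nat.mul_mod_right 2 k), Nat.mul_div_cancel_left _ (by norm_num : 0 < 2)]
  have hFo : ∀ k : ℕ, F gr (2 * k + 1) = ⌊((k : ℝ) + 1) * gr ^ 2⌋₊ := by
    intro k
    have hd : (2 * k + 1) / 2 = k := by omega
    rw [F, if_neg (by omega), hd]
  have h2inj : Function.Injective fun k : ℕ => 2 * k := fun a b h => by
    dsimp only at h; omega
  have h2inj' : Function.Injective fun k : ℕ => 2 * k + 1 := fun a b h => by
    dsimp only at h; omega
  have step1 : (1 + x) / (1 - x) = (1 - x)⁻¹ + (1 - x)⁻¹ * x := by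
    field_simp
  have hpow : (∑' m : ℕ, x ^ (m + 1)) = (∑' m : ℕ, x ^ m) * x := by
    rw [← tsum_mul_right]
    exact tsum_congr fun m => pow_succ x m
  have step2 : (1 - x)⁻¹ + (1 - x)⁻¹ * x = (∑' m : ℕ, x ^ m) + ∑' m : ℕ, x ^ (m + 1) := by
    rw [hpow, tsum_geometric_of_abs_lt_one hx]
  have hA : Summable fun k : ℕ => x ^ G (2 * k) := by simpa only [hGe] using hgeo
  have hB : Summable fun k : ℕ => x ^ G (2 * k + 1) := by simpa only [hGo] using hgeo1
  have step3 : (∑' m : ℕ, x ^ m) + (∑' m : ℕ, x ^ (m + 1)) = ∑' j : ℕ, x ^ G j := by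
    have h := tsum_even_add_odd (f := fun j : ℕ => x ^ G j) hA hB
    simp only [hGe, hGo] at h
    exact h
  have step4 : (∑' j : ℕ, x ^ G j) = ∑' j : ℕ, x ^ F gr (Φ j) := by
    refine tsum_congr fun j => ?_
    have hj : Φ j = Phi gr j := rfl
    rw [hj, hFPhi j]
  have step5 : (∑' j : ℕ, x ^ F gr (Φ j)) = ∑' j : ℕ, x ^ F gr j := Φ.tsum_eq fun j => x ^ F gr j
  have hFeS : Summable fun k : ℕ => x ^ F gr (2 * k) := by
    exact hFsum.comp_injective h2inj
  have hFoS : Summable fun k : ℕ => x ^ F gr (2 * k + 1) := by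
    exact hFsum.comp_injective h2inj'
  have step6 : (∑' j : ℕ, x ^ F gr j)
      = (∑' k : ℕ, x ^ F gr (2 * k)) + ∑' k : ℕ, x ^ F gr (2 * k + 1) :=
    (tsum_even_add_odd (f := fun j : ℕ => x ^ F gr j) hFeS hFoS).symm
  have step7 : (∑' k : ℕ, x ^ F gr (2 * k)) + (∑' k : ℕ, x ^ F gr (2 * k + 1))
      = (∑' n : ℕ, x ^ (⌊((n : ℝ) + 1) / gr⌋₊)) +
        ∑' n : ℕ, x ^ (⌊((n : ℝ) + 1) * gr ^ 2⌋₊) := by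
    congr 1
    · exact tsum_congr fun k => by rw [hFe k]
    · exact tsum_congr fun k => by rw [hFo k]
  rw [step1, step2, step3, step4, step5, step6, step7]
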